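/- The maximum, over all feasible solutions σ of the reduced EVSP instance, of the number of served customers equals 2n − opt_BPP. -/

import Mathlib

open Finset

/-- A bin packing of the `n` items with sizes `ℓ` : a collection `P` of bins (finsets of items)
such that every bin is nonempty, the total size of each bin is at most `1`, and every item
belongs to exactly one bin (i.e. `P` is a partition of `Fin n`). -/
def IsBinPacking (n : ℕ) (ℓ : Fin n → ℝ) (P : Finset (Finset (Fin n))) : Prop :=
  (∀ p ∈ P, p.Nonempty) ∧ (∀ p ∈ P, ∑ i ∈ p, ℓ i ≤ 1) ∧
  (∀ i : Fin n, ∃! p : Finset (Fin n), p ∈ P ∧ i ∈ p)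

/-- The optimal number of bins for the bin packing problem. -/
noncomputable def optBPP (n : ℕ) (ℓ : Fin n → ℝ) : ℕ :=
  sInf {k : ℕ | ∃ P : Finset (Finset (Fin n)), IsBinPacking n ℓ P ∧ P.card = k}

/-- A feasible solution of the reduced EVSP instance: customers are `Fin n ⊕ Fin n`
(`Sum.inl i` is item customer `i`, `Sum.inr j` is dummy customer `j`); `σ c = some v` means
customer `c` is served by vehicle `v`, `σ c = none` means `c` is unserved.
(i) each vehicle's item customers have total energy at most `1` (the battery capacity);
(ii) a vehicle serving a dummy customer serves no other customer. -/
def Feasible (n : ℕ) (ℓ : Fin n → ℝ) (σ : Fin n ⊕ Fin n → Option (Fin n)) : Prop :=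
  (∀ v : Fin n, ∑ i ∈ Finset.univ.filter (fun i : Fin n => σ (Sum.inl i) = some v), ℓ i ≤ 1) ∧
  (∀ v j : Fin n, σ (Sum.inr j) = some v →
    ∀ c : Fin n ⊕ Fin n, c ≠ Sum.inr j → σ c ≠ some v)

/-- The number of customers served by `σ`. -/
def servedCount (n : ℕ) (σ : Fin n ⊕ Fin n → Option (Fin n)) : ℕ :=
  (Finset.univ.filter (fun c : Fin n ⊕ Fin n => σ c ≠ none)).card

/-- The number of dummy customers served by `σ`. -/
def dummyServed (n : ℕ) (σ : Fin n ⊕ Fin n → Option (Fin n)) : ℕ :=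
  (Finset.univ.filter (fun j : Fin n => σ (Sum.inr j) ≠ none)).card

/-- The set of vehicles that serve at least one item customer under `σ`. -/
def itemVehicles (n : ℕ) (σ : Fin n ⊕ Fin n → Option (Fin n)) : Finset (Fin n) :=
  Finset.univ.filter (fun v : Fin n => ∃ i : Fin n, σ (Sum.inl i) = some v)

/-- The maximum number of served customers over all feasible solutions of the reduced EVSP
instance equals `2 * n - optBPP`. -/
lemma served_split (n : ℕ) (σ : Fin n ⊕ Fin n → Option (Fin n)) :
    servedCount n σ = (Finset.univ.filter fun i : Fin n => σ (Sum.inl i) ≠ none).card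
      + (Finset.univ.filter fun j : Fin n => σ (Sum.inr j) ≠ none).card := by
  rw [servedCount, ← Finset.card_toLeft_add_card_toRight]
  congr 1 <;> · congr 1; ext x; simp

lemma singleton_packing (n : ℕ) (ℓ : Fin n → ℝ) (hℓ : ∀ i : Fin n, 0 < ℓ i ∧ ℓ i ≤ 1) :
    IsBinPacking n ℓ ((Finset.univ : Finset (Fin n)).image fun i => {i}) ∧
      ((Finset.univ : Finset (Fin n)).image fun i => ({i} : Finset (Fin n))).card = n := by
  refine ⟨⟨?_, ?_, ?_⟩, ?_⟩
  · rintro p hp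
    simp only [mem_image] at hp
    obtain ⟨i, -, rfl⟩ := hp
    exact ⟨i, mem_singleton_self i⟩
  · rintro p hp
    simp only [mem_image] at hp
    obtain ⟨i, -, rfl⟩ := hp
    simpa using (hℓ i).2
  · intro i
    refine ⟨{i}, ⟨mem_image_of_mem _ (mem_univ i), mem_singleton_self i⟩, ?_⟩
    rintro q ⟨hq, hiq⟩
    simp only [mem_image] at hq
    obtain ⟨j, -, rfl⟩ := hq
    simp only [mem_singleton] at hiq
    subst hiq; rfl
  · rw [Finset.card_image_of_injective _ Finset.singleton_injective, card_univ, Fintype.card_fin]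

lemma opt_le (n : ℕ) (ℓ : Fin n → ℝ) (hℓ : ∀ i : Fin n, 0 < ℓ i ∧ ℓ i ≤ 1) :
    optBPP n ℓ ≤ n :=
  Nat.sInf_le ⟨_, (singleton_packing n ℓ hℓ).1, (singleton_packing n ℓ hℓ).2⟩

lemma opt_mem (n : ℕ) (ℓ : Fin n → ℝ) (hℓ : ∀ i : Fin n, 0 < ℓ i ∧ ℓ i ≤ 1) :
    ∃ P : Finset (Finset (Fin n)), IsBinPacking n ℓ P ∧ P.card = optBPP n ℓ := by
  have : optBPP n ℓ ∈ {k : ℕ | ∃ P : Finset (Finset (Fin n)), IsBinPacking n ℓ P ∧ P.card = k} :=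
    Nat.sInf_mem ⟨n, _, (singleton_packing n ℓ hℓ).1, (singleton_packing n ℓ hℓ).2⟩
  exact this

lemma mem_part (n : ℕ) (ℓ : Fin n → ℝ) (hℓ : ∀ i : Fin n, 0 < ℓ i ∧ ℓ i ≤ 1) :
    ∃ σ : Fin n ⊕ Fin n → Option (Fin n),
      Feasible n ℓ σ ∧ servedCount n σ = 2 * n - optBPP n ℓ := by
  classical
  obtain ⟨P, hP, hcard⟩ := opt_mem n ℓ hℓ
  have hkn : optBPP n ℓ ≤ n := opt_le n ℓ hℓ
  have hcardle : Fintype.card {p // p ∈ P} ≤ Fintype.card (Fin n) := by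
    rw [Fintype.card_coe, Fintype.card_fin, hcard]; exact hkn
  obtain ⟨e⟩ := Function.Embedding.nonempty_of_card_le hcardle
  have hbin : ∀ i : Fin n, ∃ p, p ∈ P ∧ i ∈ p := fun i => (hP.2.2 i).exists
  set T : Finset (Fin n) := Finset.univ.image (fun p : {p // p ∈ P} => e p) with hT
  set B : Fin n → {p // p ∈ P} :=
    fun i => ⟨Classical.choose (hbin i), (Classical.choose_spec (hbin i)).1⟩ with hB
  have hBmem : ∀ i, i ∈ (B i).1 := fun i => (Classical.choose_spec (hbin i)).2
  have hBuniq : ∀ i (p : {p // p ∈ P}), i ∈ p.1 → B i = p := by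
    intro i p hip
    exact Subtype.ext ((hP.2.2 i).unique ⟨(B i).2, hBmem i⟩ ⟨p.2, hip⟩)
  refine ⟨fun c => match c with
    | Sum.inl i => some (e (B i))
    | Sum.inr j => if j ∈ T then none else some j, ⟨?_, ?_⟩, ?_⟩
  · -- capacity
    intro v
    by_cases hv : v ∈ T
    · obtain ⟨p, -, hpv⟩ := mem_image.mp hv
      have hfe : (Finset.univ.filter fun i : Fin n => e (B i) = v) = p.1 := by
        ext i
        simp only [mem_filter, mem_univ, true_and]
        constructor
        · intro h
          have : B i = p := e.injective (h.trans hpv.symm)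
          rw [← this]; exact hBmem i
        · intro hip
          rw [hBuniq i p hip, hpv]
      simpa [hfe] using hP.2.1 p.1 p.2
    · have hfe : (Finset.univ.filter fun i : Fin n => e (B i) = v) = ∅ := by
        ext i
        simp only [mem_filter, mem_univ, true_and, notMem_empty, iff_false]
        intro h
        exact hv (h ▸ mem_image_of_mem _ (mem_univ (B i)))
      simp [hfe]
  · -- dummy exclusivity
    intro v j hj c hc
    by_cases hjT : j ∈ T
    · simp [hjT] at hj
    · simp only [if_neg hjT, Option.some.injEq] at hj
      subst hj
      cases c with
      | inl i =>
        simp only [ne_eq, Option.some.injEq]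
        intro h
        exact hjT (h ▸ mem_image_of_mem _ (mem_univ (B i)))
      | inr j' =>
        have hj' : j' ≠ j := fun h => hc (by rw [h])
        by_cases hj'T : j' ∈ T
        · simp [hj'T]
        · simp [hj'T, hj']
  · -- count
    rw [served_split]
    have h1 : (Finset.univ.filter fun i : Fin n =>
        (some (e (B i)) : Option (Fin n)) ≠ none).card = n := by
      rw [filter_true_of_mem (by simp), card_univ, Fintype.card_fin]
    have h2 : (Finset.univ.filter fun j : Fin n =>
        (if j ∈ T then none else some j : Option (Fin n)) ≠ none)
        = Finset.univ.filter fun j : Fin n => j ∉ T := by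
      ext j
      by_cases hjT : j ∈ T <;> simp [hjT]
    have hTcard : T.card = optBPP n ℓ := by
      rw [hT, Finset.card_image_of_injective _ e.injective, card_univ, Fintype.card_coe, hcard]
    have h3 := Finset.card_filter_add_card_filter_not
      (s := (Finset.univ : Finset (Fin n))) (p := fun j => j ∈ T)
    have hTfilter : Finset.univ.filter (fun j : Fin n => j ∈ T) = T := by
      ext j; simp
    rw [hTfilter, card_univ, Fintype.card_fin] at h3
    simp only [h1, h2]
    omega

lemma ub_part (n : ℕ) (hn : 1 ≤ n) (ℓ : Fin n → ℝ) (hℓ : ∀ i : Fin n, 0 < ℓ i ∧ ℓ i ≤ 1)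
    (σ : Fin n ⊕ Fin n → Option (Fin n)) (hσ : Feasible n ℓ σ) :
    servedCount n σ ≤ 2 * n - optBPP n ℓ := by
  classical
  set V := itemVehicles n σ with hV
  set U := Finset.univ.filter (fun i : Fin n => σ (Sum.inl i) = none) with hU
  set Q := (V.image fun v => Finset.univ.filter fun i : Fin n => σ (Sum.inl i) = some v)
    ∪ (U.image fun i => ({i} : Finset (Fin n))) with hQ
  have hQpack : IsBinPacking n ℓ Q := by
    refine ⟨?_, ?_, ?_⟩
    · intro p hp
      rcases mem_union.mp hp with hp | hp
      · obtain ⟨v, hv, rfl⟩ := mem_image.mp hp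
        obtain ⟨i, hi⟩ := (mem_filter.mp hv).2
        exact ⟨i, by simp [hi]⟩
      · obtain ⟨i, -, rfl⟩ := mem_image.mp hp
        exact ⟨i, mem_singleton_self i⟩
    · intro p hp
      rcases mem_union.mp hp with hp | hp
      · obtain ⟨v, -, rfl⟩ := mem_image.mp hp
        exact hσ.1 v
      · obtain ⟨i, -, rfl⟩ := mem_image.mp hp
        simpa using (hℓ i).2
    · intro i
      rcases h : σ (Sum.inl i) with _ | v
      · refine ⟨{i}, ⟨mem_union_right _ (mem_image_of_mem _ (by simp [hU, h])),
          mem_singleton_self i⟩, ?_⟩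
        rintro q ⟨hq, hiq⟩
        rcases mem_union.mp hq with hq | hq
        · obtain ⟨v, -, rfl⟩ := mem_image.mp hq
          rw [mem_filter] at hiq
          rw [h] at hiq
          exact absurd hiq.2 (by simp)
        · obtain ⟨i', -, rfl⟩ := mem_image.mp hq
          rw [mem_singleton] at hiq
          subst hiq; rfl
      · have hvV : v ∈ V := mem_filter.mpr ⟨mem_univ v, ⟨i, h⟩⟩
        refine ⟨Finset.univ.filter fun i' : Fin n => σ (Sum.inl i') = some v,
          ⟨mem_union_left _ (mem_image_of_mem _ hvV), by simp [h]⟩, ?_⟩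
        rintro q ⟨hq, hiq⟩
        rcases mem_union.mp hq with hq | hq
        · obtain ⟨w, -, rfl⟩ := mem_image.mp hq
          have := (mem_filter.mp hiq).2
          rw [h] at this
          rw [Option.some.injEq] at this
          rw [this]
        · obtain ⟨i', hi', rfl⟩ := mem_image.mp hq
          rw [mem_singleton] at hiq
          subst hiq
          rw [hU, mem_filter] at hi'
          rw [h] at hi'
          exact absurd hi'.2 (by simp)
  have hopt : optBPP n ℓ ≤ Q.card := Nat.sInf_le ⟨Q, hQpack, rfl⟩
  have hQle : Q.card ≤ V.card + U.card :=
    (card_union_le _ _).trans (add_le_add (card_image_le) (card_image_le))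
  -- dummy count bound
  have hdummy : (Finset.univ.filter fun j : Fin n => σ (Sum.inr j) ≠ none).card
      ≤ (Finset.univ.filter fun v : Fin n => v ∉ V).card := by
    apply Finset.card_le_card_of_injOn (fun j => (σ (Sum.inr j)).getD ⟨0, hn⟩)
    · intro j hj
      obtain ⟨v, hv⟩ := Option.ne_none_iff_exists'.mp (mem_filter.mp hj).2
      simp only [hv, Option.getD_some, mem_coe, mem_filter, mem_univ, true_and]
      intro hvV
      obtain ⟨i, hi⟩ := (mem_filter.mp hvV).2
      exact hσ.2 v j hv (Sum.inl i) (by simp) hi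
    · intro j1 hj1 j2 hj2 hf
      by_contra hne
      obtain ⟨v1, hv1⟩ := Option.ne_none_iff_exists'.mp (mem_filter.mp (mem_coe.mp hj1)).2
      obtain ⟨v2, hv2⟩ := Option.ne_none_iff_exists'.mp (mem_filter.mp (mem_coe.mp hj2)).2
      simp only [hv1, hv2, Option.getD_some] at hf
      subst hf
      exact hσ.2 v1 j1 hv1 (Sum.inr j2) (by simp [Ne.symm hne]) hv2
  have hVsplit := Finset.card_filter_add_card_filter_not
    (s := (Finset.univ : Finset (Fin n))) (p := fun v => v ∈ V)
  have hVfilter : Finset.univ.filter (fun v : Fin n => v ∈ V) = V := by ext v; simp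
  rw [hVfilter, card_univ, Fintype.card_fin] at hVsplit
  have hIsplit := Finset.card_filter_add_card_filter_not
    (s := (Finset.univ : Finset (Fin n))) (p := fun i => σ (Sum.inl i) = none)
  rw [card_univ, Fintype.card_fin] at hIsplit
  have hIU : (Finset.univ.filter fun i : Fin n => σ (Sum.inl i) = none).card = U.card := rfl
  have hbridge1 : (Finset.univ.filter fun i : Fin n => σ (Sum.inl i) ≠ none).card
      = (Finset.univ.filter fun i : Fin n => ¬σ (Sum.inl i) = none).card := rfl
  have hbridge2 : (Finset.univ.filter fun v : Fin n => v ∉ V).card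
      = (Finset.univ.filter fun v : Fin n => ¬v ∈ V).card := rfl
  rw [served_split]
  omega

theorem stmt_1 (n : ℕ) (hn : 1 ≤ n) (ℓ : Fin n → ℝ)
    (hℓ : ∀ i : Fin n, 0 < ℓ i ∧ ℓ i ≤ 1) :
    IsGreatest {m : ℕ | ∃ σ : Fin n ⊕ Fin n → Option (Fin n),
        Feasible n ℓ σ ∧ servedCount n σ = m}
      (2 * n - optBPP n ℓ) := by
  constructor
  · exact mem_part n ℓ hℓ
  · rintro m ⟨σ, hσ, rfl⟩
    exact ub_part n hn ℓ hℓ σ hσ
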